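/- Let g be a finite-dimensional simple Lie algebra over ℂ, let c, c' ∈ ℂ and s, s' ∈ g, and consider the affine Lie brackets {a,b} := ⁅a,b⁆ + c·b + s and {a,b}' := ⁅a,b⁆ + c'·b + s' on g. Then there exists a bijection φ : g → g of the form φ(a) = ψ(a) + r with ψ : g → g linear and r ∈ g, satisfying φ({a,b}) = {φ(a), φ(b)}' for all a, b ∈ g, if and only if c = c' and there exists a Lie algebra automorphism Ψ of g with s' = Ψ(s). -/

import Mathlib

/-- Proposition 4.2(2)(ii): for a finite-dimensional simple complex Lie
algebra `g`, the affgebras with brackets `{a,b} = ⁅a,b⁆ + c • b + s` and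
`{a,b}' = ⁅a,b⁆ + c' • b + s'` are isomorphic (via an affine bijection) if
and only if `c = c'` and `s' = Ψ s` for a Lie algebra automorphism `Ψ` of `g`. -/
theorem simple_complex_affgebra_iso_iff
    {g : Type*} [LieRing g] [LieAlgebra ℂ g] [Module.Finite ℂ g]
    [LieAlgebra.IsSimple ℂ g]
    (c c' : ℂ) (s s' : g)
    (br br' : g → g → g)
    (hbr : ∀ a b : g, br a b = ⁅a, b⁆ + c • b + s)
    (hbr' : ∀ a b : g, br' a b = ⁅a, b⁆ + c' • b + s') :
    (∃ (ψ : g →ₗ[ℂ] g) (r : g),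
        Function.Bijective (fun a : g => ψ a + r) ∧
        ∀ a b : g, ψ (br a b) + r = br' (ψ a + r) (ψ b + r)) ↔
    (c = c' ∧ ∃ Ψ : g ≃ₗ⁅ℂ⁆ g, s' = Ψ s) := by
  have hnt : Nontrivial g := by
    rcases subsingleton_or_nontrivial g with h | h
    · exact absurd ⟨fun x y => Subsingleton.elim _ _⟩ (LieAlgebra.IsSimple.non_abelian ℂ (L := g))
    · exact h
  constructor
  · rintro ⟨ψ, r, hbij, heq⟩
    simp only [hbr, hbr'] at heq
    -- r is central
    have hcent : ∀ x : g, ⁅x, r⁆ = 0 := by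
      intro x
      obtain ⟨a, ha⟩ := hbij.2 x
      have h00 := heq 0 0
      have ha0 := heq a 0
      simp only [map_zero, lie_zero, zero_lie, lie_self, smul_zero, zero_add, add_zero]
        at h00 ha0
      have h := ha0.symm.trans h00
      have hz : ⁅ψ a + r, r⁆ = 0 := by
        have h2 : ⁅ψ a + r, r⁆ + (c' • r + s') = 0 + (c' • r + s') := by
          rw [zero_add, ← add_assoc]; exact h
        exact add_right_cancel h2
      have ha' : ψ a + r = x := ha
      rw [← ha']; exact hz
    have hr : r = 0 := by
      have hrc : r ∈ LieAlgebra.center ℂ g := by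
        intro x; exact hcent x
      rw [LieAlgebra.center_eq_bot ℂ g] at hrc
      simpa using hrc
    subst hr
    simp only [add_zero] at hbij heq
    -- ψ s = s'
    have hs : ψ s = s' := by
      have := heq 0 0
      simpa using this
    -- c = c'
    have hcc : c = c' := by
      obtain ⟨b, hb⟩ := exists_ne (0 : g)
      have := heq 0 b
      simp only [zero_lie, zero_add, map_add, map_smul, hs] at this
      have h2 : c • ψ b = c' • ψ b := by
        have := add_right_cancel this
        simpa using this
      have hψb : ψ b ≠ 0 := fun h => hb (hbij.1 (by simp [h]))
      exact smul_left_injective ℂ hψb h2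
    subst hcc
    -- ψ preserves brackets
    have hlie : ∀ a b : g, ψ ⁅a, b⁆ = ⁅ψ a, ψ b⁆ := by
      intro a b
      have := heq a b
      simp only [map_add, map_smul, hs] at this
      exact add_right_cancel (add_right_cancel this)
    let e := LinearEquiv.ofBijective ψ hbij
    exact ⟨rfl, ⟨{ e with map_lie' := hlie _ _ }, hs.symm⟩⟩
  · rintro ⟨rfl, Ψ, hs⟩
    refine ⟨(Ψ : g →ₗ⁅ℂ⁆ g).toLinearMap, 0, by simpa using Ψ.bijective, ?_⟩
    intro a b
    simp [hbr, hbr', hs, LieHom.map_lie, LieEquiv.coe_toLieHom, LieEquiv.map_lie]
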